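/- arXiv:2404.14792 — 7 statements merged into one kernel-verified Lean document; each statement's English description precedes it below -/
import Mathlib

section
/- Let G be an α_i-metric graph and let D(u,r_u), D(v,r_v), D(w,r_w) be three disks of G that pairwise intersect. Then there exists a vertex x of G such that d(u,x) ≤ r_u, d(v,x) ≤ r_v, and d(w,x) ≤ r_w + i. -/
/-- A graph `G` is `α_i`-metric if for all vertices `u, v, w, x` with `v ∈ I(u,w)`,
`w ∈ I(v,x)` and `v` adjacent to `w`, one has `d(u,x) ≥ d(u,v) + d(v,x) - i`. -/
def alphaMetric {V : Type*} (G : SimpleGraph V) (i : ℕ) : Prop :=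
  ∀ u v w x : V,
    G.dist u v + G.dist v w = G.dist u w →
    G.dist v w + G.dist w x = G.dist v x →
    G.Adj v w →
    G.dist u v + G.dist v x ≤ G.dist u x + i

theorem stmt0 {V : Type*} [Fintype V] (G : SimpleGraph V) (hconn : G.Connected)
    (i : ℕ) (halpha : alphaMetric G i) (u v w : V) (ru rv rw : ℕ)
    (huv : ∃ a, G.dist u a ≤ ru ∧ G.dist v a ≤ rv)
    (huw : ∃ a, G.dist u a ≤ ru ∧ G.dist w a ≤ rw)
    (hvw : ∃ a, G.dist v a ≤ rv ∧ G.dist w a ≤ rw) :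
    ∃ x : V, G.dist u x ≤ ru ∧ G.dist v x ≤ rv ∧ G.dist w x ≤ rw + i := by
  classical
  obtain ⟨a, hau, hav⟩ := huv
  obtain ⟨b, hbu, hbw⟩ := huw
  obtain ⟨c, hcv, hcw⟩ := hvw
  -- the set of vertices in both the u-disk and v-disk
  set S : Finset V := Finset.univ.filter (fun x => G.dist u x ≤ ru ∧ G.dist v x ≤ rv)
    with hS
  have haS : a ∈ S := by simp [hS, hau, hav]
  obtain ⟨x, hxS, hmin⟩ := S.exists_min_image (fun z => G.dist w z) ⟨a, haS⟩
  have hxu : G.dist u x ≤ ru := by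
    have := hxS; simp [hS] at this; exact this.1
  have hxv : G.dist v x ≤ rv := by
    have := hxS; simp [hS] at this; exact this.2
  refine ⟨x, hxu, hxv, ?_⟩
  by_contra hwx
  push_neg at hwx
  -- d(x,w) > rw + i ≥ 0, so there is a neighbor y of x on a shortest (x,w)-path
  have hxw0 : G.dist x w ≠ 0 := by
    rw [SimpleGraph.dist_comm]
    omega
  obtain ⟨p, hp⟩ := (hconn x w).exists_walk_length_eq_dist
  have hpne : ¬ p.Nil := by
    intro h
    have := h.eq
    subst this
    simp [SimpleGraph.Walk.nil_iff_length_eq.mp h] at hp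
    exact hxw0 (by simp)
  obtain ⟨y, hxy, q, hq⟩ := SimpleGraph.Walk.not_nil_iff.mp hpne
  have hqlen : q.length = G.dist x w - 1 := by
    have := hp
    rw [hq] at this
    simp at this
    omega
  have hyw_le : G.dist y w ≤ G.dist x w - 1 := by
    calc G.dist y w ≤ q.length := SimpleGraph.dist_le q
    _ = G.dist x w - 1 := hqlen
  have hdxy : G.dist x y = 1 := SimpleGraph.dist_eq_one_iff_adj.mpr hxy
  have hxw_le : G.dist x w ≤ 1 + G.dist y w := by
    calc G.dist x w ≤ G.dist x y + G.dist y w := hconn.dist_triangle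
    _ = 1 + G.dist y w := by rw [hdxy]
  have hyw : G.dist y w + 1 = G.dist x w := by omega
  -- y is strictly closer to w, hence y ∉ S
  have hyS : y ∉ S := by
    intro hy
    have := hmin y hy
    have h1 : G.dist w y = G.dist y w := SimpleGraph.dist_comm
    have h2 : G.dist w x = G.dist x w := SimpleGraph.dist_comm
    omega
  simp [hS] at hyS
  -- key step: from a violated disk, derive d(x,w) ≤ rw + i via the α_i property
  have main : ∀ (z e : V) (rz : ℕ), G.dist z x ≤ rz → rz < G.dist z y →
      G.dist z e ≤ rz → G.dist w e ≤ rw → False := by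
    intro z e rz hzx hzy hze hwe
    have hzy' : G.dist z y ≤ G.dist z x + 1 := by
      calc G.dist z y ≤ G.dist z x + G.dist x y := hconn.dist_triangle
      _ = G.dist z x + 1 := by rw [hdxy]
    have hzx_eq : G.dist z x = rz := by omega
    have hzy_eq : G.dist z y = G.dist z x + 1 := by omega
    have hα := halpha z x y w (by rw [hdxy, hzy_eq]) (by rw [hdxy]; omega) hxy
    -- d(z,x) + d(x,w)  ≤ d(z,w) + i... careful: conclusion is d z x + d x w ≤ d z w + i
    have hzw : G.dist z w ≤ rz + rw := by
      calc G.dist z w ≤ G.dist z e + G.dist e w := hconn.dist_triangle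
      _ ≤ rz + rw := by
          have : G.dist e w = G.dist w e := SimpleGraph.dist_comm
          omega
    have h2 : G.dist w x = G.dist x w := SimpleGraph.dist_comm
    omega
  rcases le_or_gt (G.dist u y) ru with h | h
  · exact main v c rv hxv (hyS h) hcv hcw
  · exact main u b ru hxu h hbu hbw
end

section
/- Let G be an α_i-metric graph, let k be a nonnegative integer, and let u,v,x,y be vertices of G such that x ∈ I(u,v), d(u,x) = d(u,y), and d(v,y) ≤ d(v,x) + k. Then d(x,y) ≤ k + i + 2. -/
private lemma exists_pred {V : Type*} (G : SimpleGraph V) (hconn : G.Connected)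
    {u x : V} {T : ℕ} (h : G.dist u x = T + 1) :
    ∃ x', G.Adj x' x ∧ G.dist u x' = T := by
  obtain ⟨p, hp⟩ := (hconn x u).exists_walk_length_eq_dist
  have hxu : G.dist x u = T + 1 := by rw [SimpleGraph.dist_comm]; exact h
  cases p with
  | nil => simp at hxu
  | @cons _ b _ hadj q =>
    refine ⟨b, hadj.symm, ?_⟩
    have h1 : G.dist b u ≤ T := by
      have := SimpleGraph.dist_le q
      simp [hxu] at hp
      omega
    have h2 : G.dist u x ≤ G.dist u b + G.dist b x :=
      hconn.dist_triangle
    have h3 : G.dist b x = 1 := SimpleGraph.dist_eq_one_iff_adj.2 hadj.symm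
    have h4 : G.dist u b = G.dist b u := SimpleGraph.dist_comm
    omega

theorem stmt1 {V : Type*} [Fintype V] (G : SimpleGraph V) (hconn : G.Connected)
    (i : ℕ) (halpha : alphaMetric G i) (k : ℕ) (u v x y : V)
    (hx : G.dist u x + G.dist x v = G.dist u v)
    (hxy : G.dist u x = G.dist u y)
    (hk : G.dist v y ≤ G.dist v x + k) :
    G.dist x y ≤ k + i + 2 := by
  suffices h : ∀ T k (x y : V), G.dist u x = T →
      G.dist u x + G.dist x v = G.dist u v → G.dist u y = T →
      G.dist v y ≤ G.dist v x + k → G.dist x y ≤ k + i + 2 by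
    exact h (G.dist u x) k x y rfl hx hxy.symm hk
  intro T
  induction T with
  | zero =>
    intro k x y hux hxI huy hvy
    have hxu : u = x := hconn.dist_eq_zero_iff.mp hux
    have hyu : u = y := hconn.dist_eq_zero_iff.mp huy
    subst hxu
    rw [← hyu, SimpleGraph.dist_self]
    omega
  | succ T IH =>
    intro k x y hux hxI huy hvy
    obtain ⟨x', hax, hux'⟩ := exists_pred G hconn hux
    obtain ⟨y', hay, huy'⟩ := exists_pred G hconn huy
    -- basic distances
    have dxx' : G.dist x' x = 1 := SimpleGraph.dist_eq_one_iff_adj.2 hax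
    have dyy' : G.dist y' y = 1 := SimpleGraph.dist_eq_one_iff_adj.2 hay
    have cxv : G.dist x v = G.dist v x := SimpleGraph.dist_comm
    have cx'v : G.dist x' v = G.dist v x' := SimpleGraph.dist_comm
    have cy'v : G.dist y' v = G.dist v y' := SimpleGraph.dist_comm
    have cyv : G.dist y v = G.dist v y := SimpleGraph.dist_comm
    have cyx' : G.dist y x' = G.dist x' y := SimpleGraph.dist_comm
    have cxy : G.dist x y = G.dist y x := SimpleGraph.dist_comm
    -- d v x' = d v x + 1
    have t1 : G.dist v x' ≤ G.dist v x + G.dist x x' := hconn.dist_triangle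
    have dxx'2 : G.dist x x' = 1 := SimpleGraph.dist_eq_one_iff_adj.2 hax.symm
    have t2 : G.dist u v ≤ G.dist u x' + G.dist x' v := hconn.dist_triangle
    have hvx' : G.dist v x' = G.dist v x + 1 := by omega
    -- x' ∈ I(u, v), i.e. d u x' + d x' v = d u v
    have hx'I : G.dist u x' + G.dist x' v = G.dist u v := by omega
    -- d v x ≤ d v y  (F1)
    have t3 : G.dist u v ≤ G.dist u y + G.dist y v := hconn.dist_triangle
    have hF1 : G.dist v x ≤ G.dist v y := by omega
    -- triangles relating x, x', y, y'
    have t4 : G.dist x y ≤ G.dist x x' + G.dist x' y := hconn.dist_triangle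
    have t5 : G.dist y x' ≤ G.dist y x + G.dist x x' := by
      have : G.dist y x' ≤ G.dist y x + G.dist x x' := hconn.dist_triangle
      exact this
    have t6 : G.dist x' y ≤ G.dist x' y' + G.dist y' y := hconn.dist_triangle
    have t7 : G.dist x' y' ≤ G.dist x' y + G.dist y y' := hconn.dist_triangle
    have dy'y2 : G.dist y y' = 1 := SimpleGraph.dist_eq_one_iff_adj.2 hay.symm
    -- Win check 2 : some shortest (y,x)-path enters x from the u-side
    by_cases hwin : G.dist y x' + 1 = G.dist y x
    · -- α(y, x', x, v)
      have h1 : G.dist y x' + G.dist x' x = G.dist y x := by omega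
      have h2 : G.dist x' x + G.dist x v = G.dist x' v := by omega
      have conc := halpha y x' x v h1 h2 hax
      omega
    · have hA1 : G.dist x y ≤ G.dist x' y := by omega
      -- case on d v y'
      have t8 : G.dist v y' ≤ G.dist v y + G.dist y y' := hconn.dist_triangle
      have t9 : G.dist u v ≤ G.dist u y' + G.dist y' v := hconn.dist_triangle
      -- d v y' ≥ d v x + 1
      have hvy'lb : G.dist v x + 1 ≤ G.dist v y' := by omega
      by_cases hcase : G.dist v y' ≤ G.dist v y
      · -- branch (a) : k ≥ 1, apply IH with k-1 to (x', y')
        have hk1 : 1 ≤ k := by omega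
        have ih := IH (k - 1) x' y' hux' hx'I huy' (by omega)
        omega
      · -- branch (b) : d v y' = d v y + 1
        have hvy' : G.dist v y' = G.dist v y + 1 := by omega
        by_cases hwin2 : G.dist x' y' + 1 = G.dist x' y
        · -- α(x', y', y, v)
          have h1 : G.dist x' y' + G.dist y' y = G.dist x' y := by omega
          have h2 : G.dist y' y + G.dist y v = G.dist y' v := by omega
          have conc := halpha x' y' y v h1 h2 hay
          omega
        · have hA2 : G.dist x' y ≤ G.dist x' y' := by omega
          have ih := IH k x' y' hux' hx'I huy' (by omega)
          omega
end

section
/- Let G be an α_i-metric graph with n > 1 vertices, let u be a vertex of G, and let v_1, ..., v_n be an ordering of the vertices of G with v_n = u such that d(u,v_k) ≥ d(u,v_l) whenever k ≤ l. Then this ordering is a dismantling ordering of the power graph G^{i+1}: for every k with 1 ≤ k < n there exists ℓ with k < ℓ ≤ n such that for every x ∈ {v_k, v_{k+1}, ..., v_n}, d(x,v_k) ≤ i+1 implies d(x,v_ℓ) ≤ i+1. In particular, G^{i+1} is dismantlable. -/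
/-- Any ordering `v_0, …, v_{n-1}` of the vertices of an `α_i`-metric graph `G`,
ending at `u = v_{n-1}` and such that the distance to `u` is non-increasing along
the ordering (e.g. any BFS ordering from `u`, reversed so that `u` comes last),
is a dismantling ordering of the power graph `G^{i+1}`: for every index `k`
that is not the last one, there is an index `ℓ > k` such that every later vertex
`x = v_m` (with `m ≥ k`) at distance at most `i+1` from `v_k` in `G` (i.e. in the
closed neighbourhood of `v_k` in `G^{i+1}`) is at distance at most `i+1` from
`v_ℓ` in `G` (i.e. in the closed neighbourhood of `v_ℓ` in `G^{i+1}`).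
In particular, `G^{i+1}` is dismantlable. -/
theorem stmt4 {V : Type*} [Fintype V] (G : SimpleGraph V) (hconn : G.Connected)
    (i : ℕ) (halpha : alphaMetric G i)
    (hn : 1 < Fintype.card V) (u : V)
    (v : Fin (Fintype.card V) ≃ V)
    (hu : v ⟨Fintype.card V - 1, Nat.sub_lt (by omega) one_pos⟩ = u)
    (hmono : ∀ k l : Fin (Fintype.card V), k ≤ l → G.dist u (v l) ≤ G.dist u (v k)) :
    ∀ k : Fin (Fintype.card V), (k : ℕ) + 1 < Fintype.card V →
      ∃ l : Fin (Fintype.card V), k < l ∧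
        ∀ m : Fin (Fintype.card V), k ≤ m →
          G.dist (v m) (v k) ≤ i + 1 → G.dist (v m) (v l) ≤ i + 1 := by
  intro k hk
  have dc : ∀ a b : V, G.dist a b = G.dist b a := fun a b => SimpleGraph.dist_comm
  have hne : v k ≠ u := by
    rw [← hu]
    intro h
    have := v.injective h
    apply_fun (Fin.val) at this
    simp at this
    omega
  have hdpos : 0 < G.dist u (v k) :=
    hconn.pos_dist_of_ne (fun h => hne h.symm)
  obtain ⟨p, hp⟩ := (hconn (v k) u).exists_walk_length_eq_dist
  cases p with
  | nil => rw [dc] at hp; simp at hp; simp at hdpos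
  | cons hadj q =>
    rename_i w
    have hvku : G.dist (v k) u = G.dist u (v k) := dc ..
    have hvkw : G.dist (v k) w = 1 := SimpleGraph.dist_eq_one_iff_adj.mpr hadj
    have hwu : G.dist w u + 1 = G.dist (v k) u := by
      have h1 : G.dist w u ≤ q.length := SimpleGraph.dist_le q
      have h2 : G.dist (v k) u ≤ G.dist (v k) w + G.dist w u := hconn.dist_triangle
      simp at hp
      omega
    set l := v.symm w with hl
    have hvl : v l = w := v.apply_symm_apply w
    have hkl : k < l := by
      by_contra h
      push_neg at h
      have := hmono l k h
      rw [hvl, dc u w, dc u (v k)] at this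
      omega
    refine ⟨l, hkl, ?_⟩
    intro m hm hd
    rw [hvl]
    by_contra hx
    push_neg at hx
    have htri : G.dist (v m) w ≤ G.dist (v m) (v k) + G.dist (v k) w := hconn.dist_triangle
    have heq1 : G.dist (v m) (v k) = i + 1 := by omega
    have heq2 : G.dist (v m) w = i + 2 := by omega
    have hxu : G.dist u (v m) ≤ G.dist u (v k) := hmono k m hm
    have key := halpha (v m) (v k) w u (by omega) (by omega) hadj
    rw [heq1, dc (v m) u] at key
    omega
end

section
/- Every α_i-metric graph is δ-hyperbolic for δ = 2^{10}·(2i+1); that is, for every four vertices u,v,w,x of an α_i-metric graph, the difference between the largest and the second largest of the three sums d(u,v)+d(w,x), d(u,w)+d(v,x), d(u,x)+d(v,w) is at most 2^{11}·(2i+1). -/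
/-- `G` is `δ`-hyperbolic with `c = 2δ`: for every four vertices, the difference
between the largest and the second largest of the three distance sums
`d(u,v)+d(w,x)`, `d(u,w)+d(v,x)`, `d(u,x)+d(v,w)` is at most `c`. Equivalently,
each of the three sums is at most the maximum of the other two plus `c`. -/
def hyperbolic {V : Type*} (G : SimpleGraph V) (c : ℕ) : Prop :=
  ∀ u v w x : V,
    G.dist u v + G.dist w x ≤ max (G.dist u w + G.dist v x) (G.dist u x + G.dist v w) + c ∧
    G.dist u w + G.dist v x ≤ max (G.dist u v + G.dist w x) (G.dist u x + G.dist v w) + c ∧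
    G.dist u x + G.dist v w ≤ max (G.dist u v + G.dist w x) (G.dist u w + G.dist v x) + c

namespace AlphaHyp


variable {V : Type*} {G : SimpleGraph V} {i : ℕ}

/-- A parametrized geodesic: `f 0 … f n` consecutive adjacent, with exact distances. -/
structure IsGeo (G : SimpleGraph V) (f : ℕ → V) (n : ℕ) : Prop where
  adj : ∀ j, j < n → G.Adj (f j) (f (j+1))
  dist_eq : ∀ j k, j ≤ k → k ≤ n → G.dist (f j) (f k) + j = k

theorem exists_geo (hconn : G.Connected) (u v : V) :
    ∃ f : ℕ → V, f 0 = u ∧ f (G.dist u v) = v ∧ IsGeo G f (G.dist u v) := by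
  obtain ⟨w, hw⟩ := hconn.exists_walk_length_eq_dist u v
  refine ⟨w.getVert, w.getVert_zero, by rw [← hw]; exact w.getVert_length, ?_, ?_⟩
  · intro j hj
    exact w.adj_getVert_succ (by omega)
  · -- distances along a shortest walk are exact
    have hle : ∀ j c : ℕ, j + c ≤ w.length → G.dist (w.getVert j) (w.getVert (j + c)) ≤ c := by
      intro j c
      induction c generalizing j with
      | zero => intro _; simp
      | succ c ih =>
        intro h
        have h1 : G.dist (w.getVert j) (w.getVert (j+1)) ≤ 1 := by
          have := w.adj_getVert_succ (i := j) (by omega)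
          exact le_of_eq (SimpleGraph.dist_eq_one_iff_adj.mpr this)
        have h2 := ih (j+1) (by omega)
        calc G.dist (w.getVert j) (w.getVert (j + (c+1)))
            ≤ G.dist (w.getVert j) (w.getVert (j+1))
              + G.dist (w.getVert (j+1)) (w.getVert (j+1+c)) := by
              have : j + (c+1) = j + 1 + c := by omega
              rw [this]; exact hconn.dist_triangle
          _ ≤ 1 + c := add_le_add h1 h2
          _ = c + 1 := by omega
    intro j k hjk hk
    have e1 : G.dist u (w.getVert j) ≤ j := by
      have := hle 0 j (by omega)
      simpa [w.getVert_zero] using this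
    have e2 : G.dist (w.getVert j) (w.getVert k) ≤ k - j := by
      have := hle j (k - j) (by omega)
      have hx : j + (k - j) = k := by omega
      rwa [hx] at this
    have e3 : G.dist (w.getVert k) v ≤ w.length - k := by
      have := hle k (w.length - k) (by omega)
      have hx : k + (w.length - k) = w.length := by omega
      rwa [hx, w.getVert_length] at this
    have t1 : G.dist u v ≤ G.dist u (w.getVert j) + G.dist (w.getVert j) (w.getVert k)
        + G.dist (w.getVert k) v := by
      calc G.dist u v ≤ G.dist u (w.getVert k) + G.dist (w.getVert k) v := hconn.dist_triangle
        _ ≤ (G.dist u (w.getVert j) + G.dist (w.getVert j) (w.getVert k))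
            + G.dist (w.getVert k) v := by
            exact Nat.add_le_add_right hconn.dist_triangle _
    rw [← hw] at hk
    omega





theorem alpha' (halpha : alphaMetric G i) {u v w x : V}
    (h1 : G.dist u v + 1 = G.dist u w) (h2 : G.dist v x = 1 + G.dist w x)
    (ha : G.Adj v w) : G.dist u v + G.dist v x ≤ G.dist u x + i := by
  have hd : G.dist v w = 1 := SimpleGraph.dist_eq_one_iff_adj.mpr ha
  exact halpha u v w x (by omega) (by omega) ha

/-- adjacent step changes distance by at most one -/
theorem adj_dist_le (hconn : G.Connected) {x y z : V} (h : G.Adj x y) :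
    G.dist x z ≤ G.dist y z + 1 := by
  have h1 : G.dist x y = 1 := SimpleGraph.dist_eq_one_iff_adj.mpr h
  calc G.dist x z ≤ G.dist x y + G.dist y z := hconn.dist_triangle
    _ = G.dist y z + 1 := by omega

/-- NO-DROP (T1): along a geodesic `f` aligned away from anchor `b`
(`d b (f κ) = T + κ`), with `d b p = T`, the distance to `p` never drops below its
start value, provided that value exceeds `i`. -/
theorem no_drop (hconn : G.Connected) (halpha : alphaMetric G i)
    {f : ℕ → V} {n T : ℕ} {b p : V} (hgeo : IsGeo G f n)
    (halign : ∀ κ, κ ≤ n → G.dist b (f κ) = T + κ)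
    (hbp : G.dist b p = T) (hm : i < G.dist p (f 0)) :
    ∀ κ, κ ≤ n → G.dist p (f 0) ≤ G.dist p (f κ) := by
  intro κ
  induction κ with
  | zero => intro _; exact le_rfl
  | succ κ ih =>
    intro hκ
    have IH := ih (by omega)
    by_contra hcon
    push_neg at hcon
    -- then d p (f (κ+1)) = d p (f κ) - 1 exactly (it can drop by at most 1)
    have hadj := hgeo.adj κ (by omega)
    have hstep : G.dist p (f κ) ≤ G.dist p (f (κ+1)) + 1 := by
      rw [SimpleGraph.dist_comm]
      rw [SimpleGraph.dist_comm (u := p) (v := f (κ+1))]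
      exact adj_dist_le hconn hadj
    have hdrop : G.dist (f κ) p = 1 + G.dist (f (κ+1)) p := by
      rw [SimpleGraph.dist_comm, SimpleGraph.dist_comm (u := f (κ+1))]
      omega
    -- α-trigger (b, f κ, f (κ+1), p)
    have h1 : G.dist b (f κ) + 1 = G.dist b (f (κ+1)) := by
      rw [halign κ (by omega), halign (κ+1) (by omega)]; omega
    have := alpha' halpha h1 hdrop hadj
    -- d b (f κ) + d (f κ) p ≤ d b p + i
    rw [halign κ (by omega), hbp] at this
    have hpk : G.dist (f κ) p = G.dist p (f κ) := SimpleGraph.dist_comm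
    omega

/-- RISE-BOUND: along a geodesic `f` ending at `f n` with `d p (f n) = n`, the
distance from `p` is bounded by `max (d p (f 0)) κ + i`. -/
theorem rise_bound (hconn : G.Connected) (halpha : alphaMetric G i)
    {f : ℕ → V} {n : ℕ} {p : V} (hgeo : IsGeo G f n)
    (hpn : G.dist p (f n) = n) :
    ∀ κ, κ ≤ n → G.dist p (f κ) ≤ max (G.dist p (f 0)) κ + i := by
  intro κ
  induction κ with
  | zero => intro _; simp
  | succ κ ih =>
    intro hκ
    have IH := ih (by omega)
    have hadj := hgeo.adj κ (by omega)
    have hstep : G.dist p (f (κ+1)) ≤ G.dist p (f κ) + 1 := by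
      rw [SimpleGraph.dist_comm, SimpleGraph.dist_comm (u := p) (v := f κ)]
      exact adj_dist_le hconn hadj.symm
    rcases Nat.lt_or_ge (G.dist p (f (κ+1))) (G.dist p (f κ) + 1) with hlt | hge
    · have : max (G.dist p (f 0)) κ ≤ max (G.dist p (f 0)) (κ+1) := by
        exact max_le_max le_rfl (by omega)
      omega
    · -- rise: d p (f (κ+1)) = d p (f κ) + 1, trigger α (p, f κ, f (κ+1), f n)
      have hrise : G.dist p (f κ) + 1 = G.dist p (f (κ+1)) := by omega
      have h2 : G.dist (f κ) (f n) = 1 + G.dist (f (κ+1)) (f n) := by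
        have e1 := hgeo.dist_eq κ n (by omega) le_rfl
        have e2 := hgeo.dist_eq (κ+1) n (by omega) le_rfl
        omega
      have := alpha' halpha hrise h2 hadj
      -- d p (f κ) + d (f κ) (f n) ≤ d p (f n) + i
      have e1 := hgeo.dist_eq κ n (by omega) le_rfl
      rw [hpn] at this
      -- d p (f κ) ≤ κ + i, so d p (f (κ+1)) ≤ κ + 1 + i
      have : G.dist p (f κ) ≤ κ + i := by omega
      have hmax : κ + 1 ≤ max (G.dist p (f 0)) (κ+1) := le_max_right _ _
      omega





theorem apex (hconn : G.Connected) (halpha : alphaMetric G i)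
    {a b : V} {P : ℕ → V} {m s t : ℕ}
    (hPgeo : IsGeo G P m)
    (hfa : ∀ j, j ≤ m → G.dist a (P j) = s) (hfb : ∀ j, j ≤ m → G.dist b (P j) = t)
    (hab : G.dist a b = s + t) (hmi : 2*i + 1 ≤ m) :
    ∃ ω χ, m ≤ χ ∧ χ ≤ m + i ∧ G.dist ω b = t + χ ∧
      (∀ j, 2*i ≤ j → j ≤ m → G.dist ω (P j) = χ) := by
  have hs : G.dist (P m) a = s := by rw [SimpleGraph.dist_comm]; exact hfa m le_rfl
  obtain ⟨f, hf0, hfs, hfgeo⟩ := exists_geo hconn (P m) a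
  rw [hs] at hfs hfgeo
  -- b-alignment along f
  have halign : ∀ κ, κ ≤ s → G.dist b (f κ) = t + κ := by
    intro κ hκ
    have e1 : G.dist (f κ) (f s) + κ = s := hfgeo.dist_eq κ s hκ le_rfl
    rw [hfs] at e1
    have t1 : G.dist a b ≤ G.dist a (f κ) + G.dist (f κ) b := hconn.dist_triangle
    have c1 : G.dist a (f κ) = G.dist (f κ) a := SimpleGraph.dist_comm
    have c2 : G.dist (f κ) b = G.dist b (f κ) := SimpleGraph.dist_comm
    have e2 : G.dist (f 0) (f κ) + 0 = κ := hfgeo.dist_eq 0 κ (by omega) hκ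
    have t2 : G.dist b (f κ) ≤ G.dist b (f 0) + G.dist (f 0) (f κ) := hconn.dist_triangle
    have e3 : G.dist b (f 0) = t := by rw [hf0]; exact hfb m le_rfl
    omega
  -- start distance from P 0 along f
  have hstart : G.dist (P 0) (f 0) = m := by
    rw [hf0]
    have := hPgeo.dist_eq 0 m (by omega) le_rfl
    omega
  have hbp0 : G.dist b (P 0) = t := hfb 0 (by omega)
  -- T2 : m ≤ s
  have hnd := no_drop hconn halpha hfgeo halign hbp0 (by omega)
  have hT2 : m ≤ s := by
    have := hnd s le_rfl
    rw [hfs] at this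
    have : m ≤ G.dist (P 0) a := by omega
    have c : G.dist (P 0) a = G.dist a (P 0) := SimpleGraph.dist_comm
    have := hfa 0 (by omega)
    omega
  -- rise bound for P 0 along f
  have hpn : G.dist (P 0) (f s) = s := by
    rw [hfs, SimpleGraph.dist_comm]; exact hfa 0 (by omega)
  have hrb := rise_bound hconn halpha hfgeo hpn
  by_cases hcase : m + i ≤ s
  · -- ω := f (m+i)
    set χ := m + i with hχdef
    refine ⟨f χ, χ, Nat.le_add_right m i, le_rfl, by rw [SimpleGraph.dist_comm]; exact halign χ hcase, ?_⟩
    -- E := d (P 0) ω ≤ χ + i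
    have hE : G.dist (P 0) (f χ) ≤ χ + i := by
      have := hrb χ hcase
      rw [hstart] at this
      have : max m χ = χ := max_eq_right (by omega)
      omega
    have homa : G.dist (f χ) a + χ = s := by
      have := hfgeo.dist_eq χ s hcase le_rfl
      rw [hfs] at this; omega
    have hlow : ∀ j, j ≤ m → χ ≤ G.dist (f χ) (P j) := by
      intro j hj
      have t1 : G.dist a (P j) ≤ G.dist a (f χ) + G.dist (f χ) (P j) := hconn.dist_triangle
      have c1 : G.dist a (f χ) = G.dist (f χ) a := SimpleGraph.dist_comm
      have := hfa j hj
      omega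
    -- downward induction
    have aux : ∀ δ, δ + 2*i ≤ m → G.dist (f χ) (P (m - δ)) = χ := by
      intro δ
      induction δ with
      | zero =>
        intro _
        have h0 : G.dist (f 0) (f χ) + 0 = χ := hfgeo.dist_eq 0 χ (by omega) hcase
        rw [hf0] at h0
        simp only [Nat.sub_zero]
        rw [SimpleGraph.dist_comm]
        omega
      | succ δ ihδ =>
        intro hδ
        have IH : G.dist (f χ) (P (m - δ)) = χ := ihδ (by omega)
        set j := m - (δ+1) with hjdef
        have hj1 : j + 1 = m - δ := by omega
        have hjm : j ≤ m := by omega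
        have hup : G.dist (f χ) (P j) ≤ χ + 1 := by
          have hadj := hPgeo.adj j (by omega)
          have := adj_dist_le hconn (z := f χ) hadj
          rw [SimpleGraph.dist_comm (u := P j), SimpleGraph.dist_comm (u := P (j+1))] at this
          rw [hj1] at this
          omega
        rcases Nat.lt_or_ge (G.dist (f χ) (P j)) (χ + 1) with hlt | hge
        · have := hlow j hjm; omega
        · exfalso
          -- trigger α (P 0, P j, P (j+1), f χ)
          have hval : G.dist (f χ) (P j) = χ + 1 := by omega
          have h1 : G.dist (P 0) (P j) + 1 = G.dist (P 0) (P (j+1)) := by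
            have a1 := hPgeo.dist_eq 0 j (by omega) hjm
            have a2 := hPgeo.dist_eq 0 (j+1) (by omega) (by omega)
            omega
          have h2 : G.dist (P j) (f χ) = 1 + G.dist (P (j+1)) (f χ) := by
            have c1 : G.dist (P j) (f χ) = G.dist (f χ) (P j) := SimpleGraph.dist_comm
            have c2 : G.dist (P (j+1)) (f χ) = G.dist (f χ) (P (j+1)) := SimpleGraph.dist_comm
            rw [c1, c2, hval, hj1, IH]; omega
          have hadj := hPgeo.adj j (by omega)
          have htrig := alpha' halpha h1 h2 hadj
          have a1 := hPgeo.dist_eq 0 j (by omega) hjm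
          have c1 : G.dist (P j) (f χ) = G.dist (f χ) (P j) := SimpleGraph.dist_comm
          -- j + (χ + 1) ≤ E + i ≤ χ + 2i  ⇒ j ≤ 2i - 1, contradiction with 2i ≤ j
          have hjge : 2*i ≤ j := by omega
          omega
    intro j hj2i hjm
    have := aux (m - j) (by omega)
    have hmj : m - (m - j) = j := by omega
    rwa [hmj] at this
  · -- ω := a, χ := s
    push_neg at hcase
    refine ⟨a, s, hT2, by omega, by omega, ?_⟩
    intro j _ hjm
    exact hfa j hjm





/-- KILL: a geodesic all whose points are equidistant from two exactly-opposite
apexes is short. -/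
theorem kill (hconn : G.Connected) (halpha : alphaMetric G i)
    {ω ν : V} {Q : ℕ → V} {m₂ χa χb : ℕ}
    (hQgeo : IsGeo G Q m₂)
    (hfrω : ∀ j, j ≤ m₂ → G.dist ω (Q j) = χa)
    (hfrν : ∀ j, j ≤ m₂ → G.dist ν (Q j) = χb)
    (hων : G.dist ω ν = χa + χb)
    (hm2 : i + 1 ≤ m₂) (hχa : m₂ ≤ χa) :
    2 * m₂ ≤ χa + i + 1 := by
  set χ' := m₂ - (i+1) with hχ'def
  have hχ'add : χ' + (i + 1) = m₂ := by omega
  -- geodesic f from Q m₂ up to ω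
  have hn : G.dist (Q m₂) ω = χa := by rw [SimpleGraph.dist_comm]; exact hfrω m₂ le_rfl
  obtain ⟨f, hf0, hfχa, hfgeo⟩ := exists_geo hconn (Q m₂) ω
  rw [hn] at hfχa hfgeo
  -- ν-alignment along f
  have halignf : ∀ κ, κ ≤ χa → G.dist ν (f κ) = χb + κ := by
    intro κ hκ
    have e1 : G.dist (f κ) (f χa) + κ = χa := hfgeo.dist_eq κ χa hκ le_rfl
    rw [hfχa] at e1
    have t1 : G.dist ω ν ≤ G.dist ω (f κ) + G.dist (f κ) ν := hconn.dist_triangle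
    have c1 : G.dist ω (f κ) = G.dist (f κ) ω := SimpleGraph.dist_comm
    have c2 : G.dist (f κ) ν = G.dist ν (f κ) := SimpleGraph.dist_comm
    have t2 : G.dist ν (f κ) ≤ G.dist ν (f 0) + G.dist (f 0) (f κ) := hconn.dist_triangle
    have e2 : G.dist (f 0) (f κ) + 0 = κ := hfgeo.dist_eq 0 κ (by omega) hκ
    have e3 : G.dist ν (f 0) = χb := by rw [hf0]; exact hfrν m₂ le_rfl
    omega
  -- no-drop for Q 0 along f anchored at ν
  have hstart : G.dist (Q 0) (f 0) = m₂ := by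
    rw [hf0]
    have := hQgeo.dist_eq 0 m₂ (by omega) le_rfl
    omega
  have hνQ0 : G.dist ν (Q 0) = χb := hfrν 0 (by omega)
  have hnd := no_drop hconn halpha hfgeo halignf hνQ0 (by omega)
  -- c' := f χ'
  have hχ'le : χ' ≤ χa := by omega
  have hc'low : m₂ ≤ G.dist (Q 0) (f χ') := by
    have := hnd χ' hχ'le
    omega
  have hc'ω : G.dist (f χ') ω + χ' = χa := by
    have := hfgeo.dist_eq χ' χa hχ'le le_rfl
    rw [hfχa] at this
    exact this
  have hc'ν : G.dist ν (f χ') = χb + χ' := halignf χ' hχ'le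
  -- geodesic g from ω down to Q 0
  have hL : G.dist ω (Q 0) = χa := hfrω 0 (by omega)
  obtain ⟨g, hg0, hgL, hggeo⟩ := exists_geo hconn ω (Q 0)
  rw [hL] at hgL hggeo
  -- ν-alignment along g
  have haligng : ∀ r, r ≤ χa → G.dist ν (g r) + r = χa + χb := by
    intro r hr
    have e1 : G.dist (g r) (g χa) + r = χa := hggeo.dist_eq r χa hr le_rfl
    rw [hgL] at e1
    have t1 : G.dist ω ν ≤ G.dist ω (g r) + G.dist (g r) ν := hconn.dist_triangle
    have e2 : G.dist (g 0) (g r) + 0 = r := hggeo.dist_eq 0 r (by omega) hr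
    rw [hg0] at e2
    have c1 : G.dist ω (g r) = G.dist (g r) ω := SimpleGraph.dist_comm
    have c2 : G.dist (g r) ν = G.dist ν (g r) := SimpleGraph.dist_comm
    have t2 : G.dist ν (g r) ≤ G.dist ν (Q 0) + G.dist (Q 0) (g r) := hconn.dist_triangle
    have c3 : G.dist (Q 0) (g r) = G.dist (g r) (Q 0) := SimpleGraph.dist_comm
    omega
  -- D is non-rising along g
  have hmono : ∀ r, r ≤ χa → G.dist (f χ') (g r) ≤ G.dist (f χ') (g 0) := by
    intro r
    induction r with
    | zero => intro _; exact le_rfl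
    | succ r ih =>
      intro hr
      have IH := ih (by omega)
      have hadj := hggeo.adj r (by omega)
      have hstep : G.dist (f χ') (g (r+1)) ≤ G.dist (f χ') (g r) + 1 := by
        rw [SimpleGraph.dist_comm, SimpleGraph.dist_comm (u := f χ') (v := g r)]
        exact adj_dist_le hconn hadj.symm
      rcases Nat.lt_or_ge (G.dist (f χ') (g (r+1))) (G.dist (f χ') (g r) + 1) with hlt | hge
      · omega
      · exfalso
        have hrise : G.dist (f χ') (g r) + 1 = G.dist (f χ') (g (r+1)) := by omega
        have h2 : G.dist (g r) ν = 1 + G.dist (g (r+1)) ν := by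
          have a1 := haligng r (by omega)
          have a2 := haligng (r+1) (by omega)
          have c1 : G.dist (g r) ν = G.dist ν (g r) := SimpleGraph.dist_comm
          have c2 : G.dist (g (r+1)) ν = G.dist ν (g (r+1)) := SimpleGraph.dist_comm
          omega
        have htrig := alpha' halpha hrise h2 hadj
        -- d c' (g r) + d (g r) ν ≤ d c' ν + i
        have a1 := haligng r (by omega)
        have c1 : G.dist (g r) ν = G.dist ν (g r) := SimpleGraph.dist_comm
        have c2 : G.dist (f χ') ν = G.dist ν (f χ') := SimpleGraph.dist_comm
        -- lower bound on D r via Q 0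
        have t3 : G.dist (Q 0) (f χ') ≤ G.dist (Q 0) (g r) + G.dist (g r) (f χ') :=
          hconn.dist_triangle
        have e1 : G.dist (g r) (g χa) + r = χa := hggeo.dist_eq r χa (by omega) le_rfl
        rw [hgL] at e1
        have c3 : G.dist (Q 0) (g r) = G.dist (g r) (Q 0) := SimpleGraph.dist_comm
        have c4 : G.dist (g r) (f χ') = G.dist (f χ') (g r) := SimpleGraph.dist_comm
        omega
  have hfin := hmono χa le_rfl
  rw [hgL, hg0] at hfin
  have c5 : G.dist (f χ') (Q 0) = G.dist (Q 0) (f χ') := SimpleGraph.dist_comm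
  have c6 : G.dist (f χ') ω = G.dist (f χ') ω := rfl
  omega





/-- shifted geodesic -/
theorem IsGeo.shift {P : ℕ → V} {m c : ℕ} (h : IsGeo G P m) (hc : c ≤ m) :
    IsGeo G (fun j => P (j + c)) (m - c) := by
  constructor
  · intro j hj
    have : G.Adj (P (j + c)) (P ((j + c) + 1)) := h.adj (j + c) (by omega)
    have he : j + 1 + c = (j + c) + 1 := by omega
    simpa [he] using this
  · intro j k hjk hk
    have := h.dist_eq (j + c) (k + c) (by omega) (by omega)
    simpa using (by omega : G.dist (P (j+c)) (P (k+c)) + (j+c) = k + c → G.dist (P (j+c)) (P (k+c)) + j = k) this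

/-- W′ : a geodesic lying inside a single fiber of an interval is short. -/
theorem fiber_geo_short (hconn : G.Connected) (halpha : alphaMetric G i)
    {a b : V} {P : ℕ → V} {m s t : ℕ}
    (hPgeo : IsGeo G P m)
    (hfa : ∀ j, j ≤ m → G.dist a (P j) = s) (hfb : ∀ j, j ≤ m → G.dist b (P j) = t)
    (hab : G.dist a b = s + t) : m ≤ 10*i + 10 := by
  by_contra hcon
  push_neg at hcon
  -- first apex, a-side
  obtain ⟨ω, χa, hχa1, hχa2, hωb, hvalω⟩ :=
    apex hconn halpha hPgeo hfa hfb hab (by omega)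
  -- shifted geodesic P¹
  set P₁ : ℕ → V := fun j => P (j + 2*i) with hP₁def
  have hP₁geo : IsGeo G P₁ (m - 2*i) := hPgeo.shift (by omega)
  set m₁ := m - 2*i with hm₁def
  -- second apex, b-side, frame (b, ω)
  have hfa' : ∀ j, j ≤ m₁ → G.dist b (P₁ j) = t := by
    intro j hj; exact hfb (j + 2*i) (by omega)
  have hfb' : ∀ j, j ≤ m₁ → G.dist ω (P₁ j) = χa := by
    intro j hj; exact hvalω (j + 2*i) (by omega) (by omega)
  have hab' : G.dist b ω = t + χa := by rw [SimpleGraph.dist_comm]; exact hωb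
  obtain ⟨ν, χb, hχb1, hχb2, hνω, hvalν⟩ :=
    apex hconn halpha hP₁geo hfa' hfb' hab' (by omega)
  -- kill frame
  set Q : ℕ → V := fun j => P₁ (j + 2*i) with hQdef
  have hQgeo : IsGeo G Q (m₁ - 2*i) := hP₁geo.shift (by omega)
  set m₂ := m₁ - 2*i with hm₂def
  have hfrω : ∀ j, j ≤ m₂ → G.dist ω (Q j) = χa := by
    intro j hj
    show G.dist ω (P ((j + 2*i) + 2*i)) = χa
    exact hvalω (j + 2*i + 2*i) (by omega) (by omega)
  have hfrν : ∀ j, j ≤ m₂ → G.dist ν (Q j) = χb := by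
    intro j hj; exact hvalν (j + 2*i) (by omega) (by omega)
  have hων : G.dist ω ν = χa + χb := by
    rw [SimpleGraph.dist_comm]
    have : G.dist ν ω = χa + χb := hνω
    omega
  have hk := kill hconn halpha hQgeo hfrω hfrν hων (by omega) (by omega)
  omega





theorem IsGeo.restrict {P : ℕ → V} {m c : ℕ} (h : IsGeo G P m) (hc : c ≤ m) :
    IsGeo G P c :=
  ⟨fun j hj => h.adj j (by omega), fun j k hjk hk => h.dist_eq j k hjk (by omega)⟩

open Classical in
/-- TENT: every vertex on a geodesic from `a` to `b` is, up to defect `11i+10`,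
on a geodesic from `y` to `a` or from `y` to `b`. -/
theorem tent (hconn : G.Connected) (halpha : alphaMetric G i)
    {a b p y : V} (hp : G.dist a p + G.dist p b = G.dist a b) :
    G.dist y p + G.dist p a ≤ G.dist y a + (11*i + 10) ∨
    G.dist y p + G.dist p b ≤ G.dist y b + (11*i + 10) := by
  set s := G.dist a p with hsdef
  set t := G.dist p b with htdef
  obtain ⟨γ, hγ0, hγn, hγgeo⟩ := exists_geo hconn p y
  set n := G.dist p y with hndef
  set Fib : ℕ → Prop := fun k => G.dist a (γ k) = s ∧ G.dist (γ k) b = t with hFdef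
  set Pfx : ℕ → Prop := fun k => ∀ l, l ≤ k → Fib l with hPfxdef
  have hFib0 : Fib 0 := by
    constructor
    · rw [hγ0]
    · rw [hγ0]
  have hPfx0 : Pfx 0 := by
    intro l hl
    have : l = 0 := by omega
    rw [this]; exact hFib0
  set j' := Nat.findGreatest Pfx n with hj'def
  have hspec : Pfx j' := Nat.findGreatest_spec (m := 0) (Nat.zero_le n) hPfx0
  have hj'n : j' ≤ n := Nat.findGreatest_le (P := Pfx) n
  -- the prefix is a fiber geodesic
  have hfa' : ∀ j, j ≤ j' → G.dist a (γ j) = s := fun j hj => (hspec j hj).1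
  have hfb' : ∀ j, j ≤ j' → G.dist b (γ j) = t := by
    intro j hj
    rw [SimpleGraph.dist_comm]; exact (hspec j hj).2
  have hshort : j' ≤ 10*i + 10 :=
    fiber_geo_short hconn halpha (hγgeo.restrict hj'n) hfa' hfb' (by omega)
  rcases Nat.lt_or_ge j' n with hjn | hjn
  · -- fiber breaks at j'+1
    have hnot : ¬ Pfx (j' + 1) :=
      Nat.findGreatest_is_greatest (P := Pfx) (n := n) (k := j' + 1) (by omega) (by omega)
    have hnotFib : ¬ Fib (j' + 1) := by
      intro hF
      exact hnot (fun l hl => by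
        rcases Nat.lt_or_ge l (j' + 1) with h1 | h1
        · exact hspec l (by omega)
        · have : l = j' + 1 := by omega
          rw [this]; exact hF)
    have hadj := hγgeo.adj j' (by omega)
    obtain ⟨hFj1, hFj2⟩ := hspec j' le_rfl
    have hA1 : G.dist a (γ (j'+1)) ≤ s + 1 := by
      have := adj_dist_le hconn (z := a) hadj.symm
      rw [SimpleGraph.dist_comm (u := γ (j'+1)), SimpleGraph.dist_comm (u := γ j')] at this
      omega
    have hB1 : G.dist (γ (j'+1)) b ≤ t + 1 := by
      have := adj_dist_le hconn (z := b) hadj.symm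
      omega
    have hAB : s + t ≤ G.dist a (γ (j'+1)) + G.dist (γ (j'+1)) b := by
      have := hconn.dist_triangle (u := a) (v := γ (j'+1)) (w := b)
      omega
    have hyn : G.dist (γ j') y = n - j' := by
      have := hγgeo.dist_eq j' n hj'n le_rfl
      rw [hγn] at this
      omega
    have hyn1 : G.dist (γ (j'+1)) y = n - j' - 1 := by
      have := hγgeo.dist_eq (j'+1) n (by omega) le_rfl
      rw [hγn] at this
      omega
    have h2 : G.dist (γ j') y = 1 + G.dist (γ (j'+1)) y := by omega
    by_cases hA : G.dist a (γ (j'+1)) = s + 1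
    · -- α-trigger on the a-side
      left
      have h1 : G.dist a (γ j') + 1 = G.dist a (γ (j'+1)) := by
        rw [hFj1, hA]
      have htrig := alpha' halpha h1 h2 hadj
      rw [hFj1] at htrig
      -- s + (n - j') ≤ d a y + i
      have hyp : G.dist y p = n := by
        rw [SimpleGraph.dist_comm]
      have hpa : G.dist p a = s := by rw [SimpleGraph.dist_comm]
      have hya : G.dist y a = G.dist a y := SimpleGraph.dist_comm
      omega
    · -- then the b-side went up
      right
      have hB : G.dist (γ (j'+1)) b = t + 1 := by
        rcases Nat.lt_or_ge (G.dist a (γ (j'+1))) (s+1) with h1 | h1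
        · by_contra hB
          exact hnotFib ⟨by omega, by omega⟩
        · omega
      have hbj : G.dist b (γ j') = t := by
        rw [SimpleGraph.dist_comm]; exact hFj2
      have hbj1 : G.dist b (γ (j'+1)) = t + 1 := by
        rw [SimpleGraph.dist_comm]; exact hB
      have h1 : G.dist b (γ j') + 1 = G.dist b (γ (j'+1)) := by
        rw [hbj, hbj1]
      have htrig := alpha' halpha h1 h2 hadj
      have hyp : G.dist y p = n := by rw [SimpleGraph.dist_comm]
      have hyb : G.dist y b = G.dist b y := SimpleGraph.dist_comm
      omega
  · -- y itself is in the fiber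
    left
    have hj'eq : j' = n := by omega
    have hFn : Fib n := hspec n (by omega)
    have hyp : G.dist y p = n := by rw [SimpleGraph.dist_comm]
    have hpa : G.dist p a = s := by rw [SimpleGraph.dist_comm]
    have hya : G.dist y a = s := by
      rw [SimpleGraph.dist_comm, ← hγn]
      exact hFn.1
    omega





open Classical in
/-- crossing point for `u` on a geodesic from `w` to `x`. -/
theorem crossing (hconn : G.Connected) (halpha : alphaMetric G i)
    {w x u : V} {γ : ℕ → V} {M : ℕ}
    (hγ0 : γ 0 = w) (hγM : γ M = x) (hγgeo : IsGeo G γ M) (hM : G.dist w x = M) :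
    ∃ r, r ≤ M ∧ G.dist u (γ r) + r ≤ G.dist u w + (11*i + 10) ∧
      G.dist u (γ r) + M ≤ G.dist u x + (11*i + 10) + 2 + r := by
  set K := 11*i + 10 with hKdef
  set Ac : ℕ → Prop := fun r => G.dist u (γ r) + r ≤ G.dist u w + K with hAcdef
  have hAc0 : Ac 0 := by
    show G.dist u (γ 0) + 0 ≤ G.dist u w + K
    rw [hγ0]; omega
  set r' := Nat.findGreatest Ac M with hr'def
  have hspec : Ac r' := Nat.findGreatest_spec (m := 0) (Nat.zero_le M) hAc0
  have hr'M : r' ≤ M := Nat.findGreatest_le (P := Ac) M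
  refine ⟨r', hr'M, hspec, ?_⟩
  rcases Nat.lt_or_ge r' M with hlt | hge
  · have hnot : ¬ Ac (r' + 1) :=
      Nat.findGreatest_is_greatest (P := Ac) (n := M) (k := r' + 1) (by omega) (by omega)
    -- tent at p := γ (r'+1)
    have e1 : G.dist w (γ (r'+1)) = r' + 1 := by
      have := hγgeo.dist_eq 0 (r'+1) (by omega) (by omega)
      rw [hγ0] at this; omega
    have e2 : G.dist (γ (r'+1)) x + (r' + 1) = M := by
      have := hγgeo.dist_eq (r'+1) M (by omega) le_rfl
      rw [hγM] at this; omega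
    have hp : G.dist w (γ (r'+1)) + G.dist (γ (r'+1)) x = G.dist w x := by omega
    rcases tent hconn halpha (y := u) hp with hL | hR
    · exfalso
      apply hnot
      show G.dist u (γ (r'+1)) + (r'+1) ≤ G.dist u w + K
      have c1 : G.dist (γ (r'+1)) w = G.dist w (γ (r'+1)) := SimpleGraph.dist_comm
      omega
    · -- d u p + d p x ≤ d u x + K
      have hadj := hγgeo.adj r' (by omega)
      have hstep : G.dist u (γ r') ≤ G.dist u (γ (r'+1)) + 1 := by
        rw [SimpleGraph.dist_comm, SimpleGraph.dist_comm (u := u) (v := γ (r'+1))]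
        exact adj_dist_le hconn hadj
      omega
  · have hr'eq : r' = M := by omega
    rw [hr'eq, hγM]
    omega

theorem fourpt (hconn : G.Connected) (halpha : alphaMetric G i) (u v w x : V) :
    G.dist u v + G.dist w x ≤
      max (G.dist u w + G.dist v x) (G.dist u x + G.dist v w) + (2*(11*i + 10) + 4) := by
  set K := 11*i + 10 with hKdef
  obtain ⟨γ, hγ0, hγM, hγgeo⟩ := exists_geo hconn w x
  set M := G.dist w x with hMdef
  obtain ⟨ru, hruM, hru1, hru2⟩ := crossing hconn halpha (u := u) hγ0 hγM hγgeo rfl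
  obtain ⟨rv, hrvM, hrv1, hrv2⟩ := crossing hconn halpha (u := v) hγ0 hγM hγgeo rfl
  rcases le_or_gt ru rv with hle | hlt
  · have tA : G.dist u v ≤ G.dist u (γ ru) + G.dist (γ ru) v := hconn.dist_triangle
    have tB : G.dist (γ ru) v ≤ G.dist (γ ru) (γ rv) + G.dist (γ rv) v := hconn.dist_triangle
    have tE : G.dist (γ ru) (γ rv) + ru = rv := hγgeo.dist_eq ru rv hle hrvM
    have c1 : G.dist (γ rv) v = G.dist v (γ rv) := SimpleGraph.dist_comm
    have hmax : G.dist u x + G.dist v w ≤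
        max (G.dist u w + G.dist v x) (G.dist u x + G.dist v w) := le_max_right _ _
    omega
  · have tA : G.dist u v ≤ G.dist u (γ ru) + G.dist (γ ru) v := hconn.dist_triangle
    have tB : G.dist (γ ru) v ≤ G.dist (γ ru) (γ rv) + G.dist (γ rv) v := hconn.dist_triangle
    have tE : G.dist (γ rv) (γ ru) + rv = ru := hγgeo.dist_eq rv ru (by omega) hruM
    have c0 : G.dist (γ ru) (γ rv) = G.dist (γ rv) (γ ru) := SimpleGraph.dist_comm
    have c1 : G.dist (γ rv) v = G.dist v (γ rv) := SimpleGraph.dist_comm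
    have hmax : G.dist u w + G.dist v x ≤
        max (G.dist u w + G.dist v x) (G.dist u x + G.dist v w) := le_max_left _ _
    omega

theorem main (hconn : G.Connected) (halpha : alphaMetric G i) :
    hyperbolic G (2 ^ 11 * (2 * i + 1)) := by
  have hc : 2*(11*i + 10) + 4 ≤ 2 ^ 11 * (2 * i + 1) := by norm_num; omega
  intro u v w x
  refine ⟨?_, ?_, ?_⟩
  · have := fourpt hconn halpha u v w x
    omega
  · have := fourpt hconn halpha u w v x
    have c1 : G.dist w v = G.dist v w := SimpleGraph.dist_comm
    rw [c1] at this
    omega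
  · have := fourpt hconn halpha u x v w
    have c1 : G.dist x w = G.dist w x := SimpleGraph.dist_comm
    have c2 : G.dist x v = G.dist v x := SimpleGraph.dist_comm
    rw [c1, c2] at this
    omega



end AlphaHyp

/-- Every `α_i`-metric graph is `δ`-hyperbolic for `δ = 2^10 (2i+1)`,
i.e. the largest minus the second largest distance sum is at most
`2δ = 2^11 (2i+1)`. -/
theorem stmt6 {V : Type*} [Fintype V] (G : SimpleGraph V) (hconn : G.Connected)
    (i : ℕ) (halpha : alphaMetric G i) :
    hyperbolic G (2 ^ 11 * (2 * i + 1)) :=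
  AlphaHyp.main hconn halpha
end

section
/- Every δ-hyperbolic graph satisfies the (δ,2δ)-bow metric: for all vertices u,v,w,x with v ∈ I(u,w), w ∈ I(v,x), and d(v,w) > δ, one has d(u,x) ≥ d(u,v) + d(v,w) + d(w,x) - 2δ. -/
/-- `G` is `δ`-hyperbolic (with `δ` a nonnegative half-integer, here an
arbitrary nonnegative rational): for every four vertices, the difference
between the largest and the second largest of the three distance sums
`d(u,v)+d(w,x)`, `d(u,w)+d(v,x)`, `d(u,x)+d(v,w)` is at most `2δ`. Equivalently,
each of the three sums is at most the maximum of the other two plus `2δ`. -/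
def hyperbolicQ {V : Type*} (G : SimpleGraph V) (δ : ℚ) : Prop :=
  ∀ u v w x : V,
    (G.dist u v + G.dist w x : ℚ) ≤
      max (G.dist u w + G.dist v x : ℚ) (G.dist u x + G.dist v w : ℚ) + 2 * δ ∧
    (G.dist u w + G.dist v x : ℚ) ≤
      max (G.dist u v + G.dist w x : ℚ) (G.dist u x + G.dist v w : ℚ) + 2 * δ ∧
    (G.dist u x + G.dist v w : ℚ) ≤
      max (G.dist u v + G.dist w x : ℚ) (G.dist u w + G.dist v x : ℚ) + 2 * δ

/-- Every `δ`-hyperbolic graph satisfies the `(δ, 2δ)`-bow metric: for all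
vertices `u, v, w, x` with `v ∈ I(u,w)`, `w ∈ I(v,x)` and `d(v,w) > δ`, one has
`d(u,x) ≥ d(u,v) + d(v,w) + d(w,x) - 2δ`. -/
theorem stmt15 {V : Type*} [Fintype V] (G : SimpleGraph V) (hconn : G.Connected)
    (δ : ℚ) (hδ : 0 ≤ δ) (hhyp : hyperbolicQ G δ) (u v w x : V)
    (hv : G.dist u v + G.dist v w = G.dist u w)
    (hw : G.dist v w + G.dist w x = G.dist v x)
    (hover : (δ : ℚ) < G.dist v w) :
    (G.dist u v + G.dist v w + G.dist w x : ℚ) ≤ G.dist u x + 2 * δ := by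
  obtain ⟨-, h2, -⟩ := hhyp u v w x
  have hv' : (G.dist u w : ℚ) = G.dist u v + G.dist v w := by exact_mod_cast hv.symm
  have hw' : (G.dist v x : ℚ) = G.dist v w + G.dist w x := by exact_mod_cast hw.symm
  rw [hv', hw'] at h2
  rcases max_choice ((G.dist u v : ℚ) + G.dist w x) ((G.dist u x : ℚ) + G.dist v w) with h | h <;>
    rw [h] at h2 <;> linarith
end

section
/- For every nonnegative integer i, there exists a 1-hyperbolic graph that is not α_i-metric. (For instance, the ladder of height ℓ is 1-hyperbolic but satisfies the α_j-metric property only for j ≥ 2ℓ.) -/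
/-- Ladder graph on `Fin (n+1) × Bool`. -/
def ladder (n : ℕ) : SimpleGraph (Fin (n+1) × Bool) where
  Adj x y := (x.2 = y.2 ∧ Nat.dist x.1.val y.1.val = 1) ∨ (x.1 = y.1 ∧ x.2 ≠ y.2)
  symm := by
    constructor
    rintro ⟨a,p⟩ ⟨b,q⟩ (⟨h1,h2⟩|⟨h1,h2⟩)
    · exact Or.inl ⟨h1.symm, by rwa [Nat.dist_comm]⟩
    · exact Or.inr ⟨h1.symm, h2.symm⟩
  loopless := by
    constructor
    rintro ⟨a,p⟩ (⟨_,h2⟩|⟨_,h2⟩)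
    · simp [Nat.dist_self] at h2
    · exact h2 rfl

/-- Distance formula candidate. -/
def lD {n : ℕ} (x y : Fin (n+1) × Bool) : ℕ :=
  Nat.dist x.1.val y.1.val + (if x.2 = y.2 then 0 else 1)

lemma lD_le_walk {n : ℕ} : ∀ {x y : Fin (n+1) × Bool} (W : (ladder n).Walk x y),
    lD x y ≤ W.length := by
  intro x y W
  induction W with
  | nil => simp [lD]
  | cons h W ih =>
    rename_i u v w
    rcases h with ⟨h1,h2⟩|⟨h1,h2⟩
    · have := Nat.dist.triangle_inequality u.1.val v.1.val w.1.val
      simp only [lD, SimpleGraph.Walk.length_cons, h1] at *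
      simp only [SimpleGraph.Walk.length]
      omega
    · simp only [lD, SimpleGraph.Walk.length_cons, h1] at *
      rcases u with ⟨a,p⟩; rcases v with ⟨b,q⟩; rcases w with ⟨c,r⟩
      simp_all
      rcases p <;> rcases q <;> rcases r <;> simp_all <;> simp only [SimpleGraph.Walk.length] <;> omega

lemma ladder_walk_horiz {n : ℕ} : ∀ (k : ℕ) (a b : Fin (n+1)) (p : Bool),
    Nat.dist a.val b.val = k → ∃ W : (ladder n).Walk (a,p) (b,p), W.length = k := by
  intro k
  induction k with
  | zero =>
    intro a b p h
    have : a = b := Fin.ext (Nat.eq_of_dist_eq_zero h)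
    subst this
    exact ⟨SimpleGraph.Walk.nil, rfl⟩
  | succ k ih =>
    intro a b p h
    rcases Nat.lt_or_ge a.val b.val with hlt | hge
    · have hc : a.val + 1 < n + 1 := by have := b.isLt; omega
      set c : Fin (n+1) := ⟨a.val + 1, hc⟩ with hcdef
      have hadj : (ladder n).Adj (a,p) (c,p) := by
        refine Or.inl ⟨rfl, ?_⟩; simp only [hcdef, Nat.dist]; omega
      have hd : Nat.dist c.val b.val = k := by
        simp only [hcdef, Nat.dist] at *; omega
      obtain ⟨W, hW⟩ := ih c b p hd
      exact ⟨SimpleGraph.Walk.cons hadj W, by simp [hW]⟩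
    · have ha : 0 < a.val := by simp [Nat.dist] at h; omega
      set c : Fin (n+1) := ⟨a.val - 1, by omega⟩ with hcdef
      have hadj : (ladder n).Adj (a,p) (c,p) := by
        refine Or.inl ⟨rfl, ?_⟩; simp only [hcdef, Nat.dist]; omega
      have hd : Nat.dist c.val b.val = k := by
        simp only [hcdef, Nat.dist] at *; omega
      obtain ⟨W, hW⟩ := ih c b p hd
      exact ⟨SimpleGraph.Walk.cons hadj W, by simp [hW]⟩

lemma ladder_walk {n : ℕ} (x y : Fin (n+1) × Bool) :
    ∃ W : (ladder n).Walk x y, W.length = lD x y := by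
  rcases x with ⟨a,p⟩; rcases y with ⟨b,q⟩
  obtain ⟨W, hW⟩ := ladder_walk_horiz (Nat.dist a.val b.val) a b p rfl
  by_cases hpq : p = q
  · subst hpq
    exact ⟨W, by simp [lD, hW]⟩
  · have hadj : (ladder n).Adj (b,p) (b,q) := Or.inr ⟨rfl, hpq⟩
    refine ⟨W.append (SimpleGraph.Walk.cons hadj SimpleGraph.Walk.nil), ?_⟩
    simp [lD, hW, hpq]

lemma ladder_connected (n : ℕ) : (ladder n).Connected := by
  rw [SimpleGraph.connected_iff]
  refine ⟨fun x y => ?_, ⟨(0, false)⟩⟩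
  obtain ⟨W, _⟩ := ladder_walk x y
  exact W.reachable

lemma ladder_dist {n : ℕ} (x y : Fin (n+1) × Bool) : (ladder n).dist x y = lD x y := by
  obtain ⟨W, hW⟩ := ladder_walk x y
  refine le_antisymm (hW ▸ SimpleGraph.dist_le W) ?_
  obtain ⟨W', hW'⟩ := ((ladder_connected n).exists_walk_length_eq_dist x y)
  exact hW' ▸ lD_le_walk W'

lemma line4 (a b c d : ℕ) :
    Nat.dist a b + Nat.dist c d ≤ Nat.dist a c + Nat.dist b d ∨
    Nat.dist a b + Nat.dist c d ≤ Nat.dist a d + Nat.dist b c := by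
  simp only [Nat.dist]; omega

lemma le_max_add {x a b c : ℕ} (h : x ≤ a + c ∨ x ≤ b + c) : x ≤ max a b + c := by
  rcases h with h | h
  · exact h.trans (add_le_add_left (le_max_left a b) c)
  · exact h.trans (add_le_add_left (le_max_right a b) c)

lemma hyp1 {A B C D E F e1 e2 e3 e4 e5 e6 : ℕ}
    (h : A + B ≤ C + D ∨ A + B ≤ E + F) (he1 : e1 ≤ 1) (he2 : e2 ≤ 1) :
    (A + e1) + (B + e2) ≤ max ((C + e3) + (D + e4)) ((E + e5) + (F + e6)) + 2 := by
  apply le_max_add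
  rcases h with h | h
  · left; omega
  · right; omega

lemma eps_le {p q : Bool} : (if p = q then (0:ℕ) else 1) ≤ 1 := by split <;> omega

theorem ladder_hyperbolic (n : ℕ) : hyperbolic (ladder n) 2 := by
  rintro ⟨a,p⟩ ⟨b,q⟩ ⟨c,r⟩ ⟨d,s⟩
  simp only [ladder_dist, lD]
  have h2 := line4 a c b d
  have h3 := line4 a d b c
  rw [Nat.dist_comm (c:ℕ) (b:ℕ)] at h2
  rw [Nat.dist_comm (d:ℕ) (c:ℕ), Nat.dist_comm (d:ℕ) (b:ℕ)] at h3
  exact ⟨hyp1 (line4 a b c d) eps_le eps_le, hyp1 h2 eps_le eps_le, hyp1 h3 eps_le eps_le⟩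

/-- For every nonnegative integer `i`, there exists a (finite, connected)
`1`-hyperbolic graph that is not `α_i`-metric. -/
theorem stmt16 (i : ℕ) :
    ∃ (V : Type) (_ : Fintype V) (G : SimpleGraph V),
      G.Connected ∧ hyperbolic G 2 ∧ ¬ alphaMetric G i := by
  refine ⟨Fin (i+2) × Bool, inferInstance, ladder (i+1), ladder_connected _,
    ladder_hyperbolic _, fun h => ?_⟩
  have hc := h (⟨0, by omega⟩, false) (⟨i+1, by omega⟩, false)
      (⟨i+1, by omega⟩, true) (⟨0, by omega⟩, true)
      (by simp [ladder_dist, lD, Nat.dist])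
      (by simp [ladder_dist, lD, Nat.dist]; omega)
      (Or.inr ⟨rfl, by simp⟩)
  simp [ladder_dist, lD, Nat.dist] at hc
  omega
end

section
/- For every nonnegative integer j, there exists an α_1-metric graph G whose 1-subdivision graph Σ(G) is not α_j-metric. (For instance, the triangular (2,n)-grid is α_1-metric, but its 1-subdivision is not α_i-metric for any i ≤ 4n - 5.) -/
/-- The 1-subdivision `Σ(G)` of `G`: every edge `uv` is replaced by a path
`(u, e_{uv}, v)` of length two through a new vertex `e_{uv}`. -/
def subdivision {V : Type*} (G : SimpleGraph V) : SimpleGraph (V ⊕ G.edgeSet) where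
  Adj a b :=
    (∃ (u : V) (e : G.edgeSet), u ∈ (e : Sym2 V) ∧ a = Sum.inl u ∧ b = Sum.inr e) ∨
    (∃ (u : V) (e : G.edgeSet), u ∈ (e : Sym2 V) ∧ a = Sum.inr e ∧ b = Sum.inl u)
  symm := ⟨by
    rintro a b (⟨u, e, hu, rfl, rfl⟩ | ⟨u, e, hu, rfl, rfl⟩)
    · exact Or.inr ⟨u, e, hu, rfl, rfl⟩
    · exact Or.inl ⟨u, e, hu, rfl, rfl⟩⟩
  loopless := ⟨by
    rintro a (⟨u, e, hu, rfl, h⟩ | ⟨u, e, hu, rfl, h⟩) <;> cases h⟩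

open SimpleGraph Sum

/-- absolute difference helper: `dd a b = ⌈|a-b|/2⌉`. -/
def dd (a b : ℕ) : ℕ := ((a - b) + (b - a) + 1) / 2

/-- The square of a path: the triangular strip graph. -/
def pathPow (m : ℕ) : SimpleGraph (Fin m) where
  Adj a b := a ≠ b ∧ a.val ≤ b.val + 2 ∧ b.val ≤ a.val + 2
  symm := ⟨by rintro a b ⟨h1, h2, h3⟩; exact ⟨h1.symm, h3, h2⟩⟩
  loopless := ⟨by rintro a ⟨h, _⟩; exact h rfl⟩

lemma pathPow_adj {m : ℕ} {a b : Fin m} (h1 : a.val ≠ b.val)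
    (h2 : a.val ≤ b.val + 2) (h3 : b.val ≤ a.val + 2) : (pathPow m).Adj a b :=
  ⟨fun h => h1 (congrArg Fin.val h), h2, h3⟩

lemma pathPow_adj_val {m : ℕ} {a b : Fin m} (h : (pathPow m).Adj a b) :
    a.val ≠ b.val ∧ a.val ≤ b.val + 2 ∧ b.val ≤ a.val + 2 :=
  ⟨fun hh => h.1 (Fin.ext hh), h.2.1, h.2.2⟩

/-- Lipschitz potential lower bound along walks. -/
lemma lip {V : Type*} {H : SimpleGraph V} (f : V → ℕ) (c : ℕ)
    (hf : ∀ a b, H.Adj a b → f a ≤ f b + c) :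
    ∀ {a b : V} (W : H.Walk a b), f a ≤ f b + c * W.length := by
  intro a b W
  induction W with
  | nil => simp
  | @cons u v w h p ih =>
      have h1 := hf _ _ h
      simp only [SimpleGraph.Walk.length_cons]
      have : c * (p.length + 1) = c * p.length + c := by ring
      omega

/-- Walks in `pathPow`: from `i` to `i+k` of length `⌈k/2⌉`. -/
lemma pathPow_walk (m : ℕ) : ∀ k i : ℕ, ∀ h : i + k < m,
    ∃ W : (pathPow m).Walk ⟨i, by omega⟩ ⟨i + k, h⟩, W.length = (k + 1) / 2 := by
  intro k
  induction k using Nat.strong_induction_on with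
  | _ k ih =>
    match k with
    | 0 => intro i h; exact ⟨SimpleGraph.Walk.nil, rfl⟩
    | 1 =>
        intro i h
        refine ⟨SimpleGraph.Walk.cons (pathPow_adj (show i ≠ i + 1 by omega)
          (show i ≤ i + 1 + 2 by omega) (show i + 1 ≤ i + 2 by omega))
          SimpleGraph.Walk.nil, by simp⟩
    | (k + 2) =>
        intro i h
        obtain ⟨W, hW⟩ := ih k (by omega) (i + 2) (by omega)
        refine ⟨SimpleGraph.Walk.cons
          (pathPow_adj (a := ⟨i, by omega⟩) (b := ⟨i + 2, by omega⟩)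
            (show i ≠ i + 2 by omega) (show i ≤ i + 2 + 2 by omega)
            (show i + 2 ≤ i + 2 by omega))
          (W.copy rfl (Fin.ext (show i + 2 + k = i + (k + 2) by omega))), ?_⟩
        simp only [SimpleGraph.Walk.length_cons, SimpleGraph.Walk.length_copy, hW]
        omega

lemma pathPow_walk' {m : ℕ} (i j : Fin m) (hle : i.val ≤ j.val) :
    ∃ W : (pathPow m).Walk i j, W.length = (j.val - i.val + 1) / 2 := by
  obtain ⟨W, hW⟩ := pathPow_walk m (j.val - i.val) i.val (by omega)
  refine ⟨W.copy (Fin.ext rfl) (Fin.ext (show i.val + (j.val - i.val) = j.val by omega)), ?_⟩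
  simpa using hW

lemma pathPow_reachable {m : ℕ} (i j : Fin m) : (pathPow m).Reachable i j := by
  rcases le_or_gt i.val j.val with hle | hlt
  · obtain ⟨W, -⟩ := pathPow_walk' i j hle
    exact ⟨W⟩
  · obtain ⟨W, -⟩ := pathPow_walk' j i (le_of_lt hlt)
    exact ⟨W.reverse⟩

lemma pathPow_dist {m : ℕ} (i j : Fin m) : (pathPow m).dist i j = dd i.val j.val := by
  have hub : (pathPow m).dist i j ≤ dd i.val j.val := by
    rcases le_or_gt i.val j.val with hle | hlt
    · obtain ⟨W, hW⟩ := pathPow_walk' i j hle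
      have := SimpleGraph.dist_le W
      unfold dd; omega
    · obtain ⟨W, hW⟩ := pathPow_walk' j i (le_of_lt hlt)
      have := SimpleGraph.dist_le W.reverse
      rw [SimpleGraph.Walk.length_reverse] at this
      unfold dd; omega
  have hlb : dd i.val j.val ≤ (pathPow m).dist i j := by
    obtain ⟨W, hW⟩ := (pathPow_reachable i j).exists_walk_length_eq_dist
    have hf : ∀ a b : Fin m, (pathPow m).Adj a b → a.val ≤ b.val + 2 := by
      intro a b hab; exact (pathPow_adj_val hab).2.1
    have h1 : i.val ≤ j.val + 2 * W.length := lip (fun v => v.val) 2 hf W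
    have h2 : j.val ≤ i.val + 2 * W.reverse.length := lip (fun v => v.val) 2 hf W.reverse
    rw [SimpleGraph.Walk.length_reverse] at h2
    rw [hW] at h1 h2
    unfold dd; omega
  omega

lemma pathPow_connected {m : ℕ} (hm : 0 < m) : (pathPow m).Connected := by
  have : Nonempty (Fin m) := ⟨⟨0, hm⟩⟩
  exact ⟨fun i j => pathPow_reachable i j⟩

lemma pathPow_alpha1 (m : ℕ) : alphaMetric (pathPow m) 1 := by
  intro u v w x h1 h2 hadj
  obtain ⟨hne, hb1, hb2⟩ := pathPow_adj_val hadj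
  simp only [pathPow_dist] at h1 h2 ⊢
  unfold dd at *
  omega
section Subdiv

lemma sub_adj_lr {V : Type*} (G : SimpleGraph V) (u : V) (e : G.edgeSet)
    (h : u ∈ (e : Sym2 V)) : (subdivision G).Adj (Sum.inl u) (Sum.inr e) :=
  Or.inl ⟨u, e, h, rfl, rfl⟩

lemma sub_adj_rl {V : Type*} (G : SimpleGraph V) (u : V) (e : G.edgeSet)
    (h : u ∈ (e : Sym2 V)) : (subdivision G).Adj (Sum.inr e) (Sum.inl u) :=
  Or.inr ⟨u, e, h, rfl, rfl⟩

lemma sub_walk {V : Type*} (G : SimpleGraph V) {a b : V} (W : G.Walk a b) :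
    ∃ W' : (subdivision G).Walk (Sum.inl a) (Sum.inl b), W'.length = 2 * W.length := by
  induction W with
  | nil => exact ⟨.nil, rfl⟩
  | @cons u v w h p ih =>
      obtain ⟨W', hW'⟩ := ih
      refine ⟨.cons (sub_adj_lr G u ⟨s(u,v), h⟩ (by simp))
        (.cons (sub_adj_rl G v ⟨s(u,v), h⟩ (by simp)) W'), ?_⟩
      simp only [SimpleGraph.Walk.length_cons, hW']
      omega

/-- The potential on the subdivision of `pathPow m`: (twice) distance from index `s`. -/
def pot (m s : ℕ) : (Fin m ⊕ (pathPow m).edgeSet) → ℕ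
  | Sum.inl i => 2 * dd i.val s
  | Sum.inr e => Sym2.lift ⟨fun a b => 2 * min (dd a.val s) (dd b.val s) + 1,
      by intro a b; dsimp only; rw [min_comm]⟩ (e : Sym2 (Fin m))

lemma pot_aux (m s : ℕ) (u : Fin m) (e : (pathPow m).edgeSet)
    (hu : u ∈ (e : Sym2 (Fin m))) :
    pot m s (Sum.inl u) ≤ pot m s (Sum.inr e) + 1 ∧
      pot m s (Sum.inr e) ≤ pot m s (Sum.inl u) + 1 := by
  obtain ⟨e, he⟩ := e
  induction e using Sym2.ind with
  | _ x y =>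
    rw [SimpleGraph.mem_edgeSet] at he
    obtain ⟨hne, h2, h3⟩ := pathPow_adj_val he
    simp only [Sym2.mem_iff] at hu
    simp only [pot, Sym2.lift_mk]
    rcases hu with rfl | rfl <;> (unfold dd; constructor <;> omega)

lemma pot_lip (m s : ℕ) : ∀ a b, (subdivision (pathPow m)).Adj a b →
    pot m s a ≤ pot m s b + 1 := by
  rintro a b (⟨u, e, hu, rfl, rfl⟩ | ⟨u, e, hu, rfl, rfl⟩)
  · exact (pot_aux m s u e hu).1
  · exact (pot_aux m s u e hu).2

lemma dist_eq_aux {V' : Type*} {S : SimpleGraph V'} {a b : V'} {L : ℕ} (W' : S.Walk a b)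
    (hlen : W'.length = L) (f : V' → ℕ) (hf : ∀ x y, S.Adj x y → f x ≤ f y + 1)
    (hpot : f b = f a + L) : S.dist a b = L := by
  have hub := SimpleGraph.dist_le W'
  have hr : S.Reachable a b := ⟨W'⟩
  obtain ⟨Wd, hWd⟩ := hr.exists_walk_length_eq_dist
  have hl : f b ≤ f a + 1 * Wd.reverse.length := lip f 1 hf Wd.reverse
  rw [SimpleGraph.Walk.length_reverse, hWd] at hl
  omega

lemma not_alpha (j : ℕ) : ¬ alphaMetric (subdivision (pathPow (2*j+3))) j := by
  intro hA
  let u0 : Fin (2*j+3) := ⟨0, by omega⟩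
  let x1 : Fin (2*j+3) := ⟨1, by omega⟩
  let q : Fin (2*j+3) := ⟨2*j+1, by omega⟩
  let p : Fin (2*j+3) := ⟨2*j+2, by omega⟩
  have he : (pathPow (2*j+3)).Adj q p :=
    pathPow_adj (show 2*j+1 ≠ 2*j+2 by omega) (show 2*j+1 ≤ 2*j+2+2 by omega)
      (show 2*j+2 ≤ 2*j+1+2 by omega)
  let e : (pathPow (2*j+3)).edgeSet := ⟨s(q, p), he⟩
  have hqe : q ∈ (e : Sym2 (Fin (2*j+3))) := Sym2.mem_mk_left q p
  have hpe : p ∈ (e : Sym2 (Fin (2*j+3))) := Sym2.mem_mk_right q p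
  -- d(v,w) = 1
  have dVW : (subdivision (pathPow (2*j+3))).dist (Sum.inl p) (Sum.inr e) = 1 :=
    SimpleGraph.dist_eq_one_iff_adj.mpr (sub_adj_lr _ p e hpe)
  -- d(u,v) = 2j+2
  have dUV : (subdivision (pathPow (2*j+3))).dist (Sum.inl u0) (Sum.inl p) = 2*j+2 := by
    obtain ⟨Wg, hWg⟩ := pathPow_walk' u0 p (show (0:ℕ) ≤ 2*j+2 by omega)
    obtain ⟨W', hW'⟩ := sub_walk _ Wg
    refine dist_eq_aux W' ?_ (pot (2*j+3) 0) (pot_lip _ 0) ?_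
    · rw [hW', hWg]; show 2*((2*j+2 - 0 + 1)/2) = 2*j+2; omega
    · show 2 * dd (2*j+2) 0 = 2 * dd 0 0 + (2*j+2); unfold dd; omega
  -- d(u,w) = 2j+3
  have dUW : (subdivision (pathPow (2*j+3))).dist (Sum.inl u0) (Sum.inr e) = 2*j+3 := by
    obtain ⟨Wg, hWg⟩ := pathPow_walk' u0 q (show (0:ℕ) ≤ 2*j+1 by omega)
    obtain ⟨W', hW'⟩ := sub_walk _ Wg
    refine dist_eq_aux (W'.concat (sub_adj_lr _ q e hqe)) ?_ (pot (2*j+3) 0) (pot_lip _ 0) ?_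
    · rw [SimpleGraph.Walk.length_concat, hW', hWg]
      show 2*((2*j+1 - 0 + 1)/2) + 1 = 2*j+3; omega
    · show 2 * min (dd (2*j+1) 0) (dd (2*j+2) 0) + 1 = 2 * dd 0 0 + (2*j+3)
      unfold dd; omega
  -- d(v,x) = 2j+2
  have dXV : (subdivision (pathPow (2*j+3))).dist (Sum.inl x1) (Sum.inl p) = 2*j+2 := by
    obtain ⟨Wg, hWg⟩ := pathPow_walk' x1 p (show (1:ℕ) ≤ 2*j+2 by omega)
    obtain ⟨W', hW'⟩ := sub_walk _ Wg
    refine dist_eq_aux W' ?_ (pot (2*j+3) 1) (pot_lip _ 1) ?_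
    · rw [hW', hWg]; show 2*((2*j+2 - 1 + 1)/2) = 2*j+2; omega
    · show 2 * dd (2*j+2) 1 = 2 * dd 1 1 + (2*j+2); unfold dd; omega
  have dVX : (subdivision (pathPow (2*j+3))).dist (Sum.inl p) (Sum.inl x1) = 2*j+2 :=
    (SimpleGraph.dist_comm).trans dXV
  -- d(w,x) = 2j+1
  have dXW : (subdivision (pathPow (2*j+3))).dist (Sum.inl x1) (Sum.inr e) = 2*j+1 := by
    obtain ⟨Wg, hWg⟩ := pathPow_walk' x1 q (show (1:ℕ) ≤ 2*j+1 by omega)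
    obtain ⟨W', hW'⟩ := sub_walk _ Wg
    refine dist_eq_aux (W'.concat (sub_adj_lr _ q e hqe)) ?_ (pot (2*j+3) 1) (pot_lip _ 1) ?_
    · rw [SimpleGraph.Walk.length_concat, hW', hWg]
      show 2*((2*j+1 - 1 + 1)/2) + 1 = 2*j+1; omega
    · show 2 * min (dd (2*j+1) 1) (dd (2*j+2) 1) + 1 = 2 * dd 1 1 + (2*j+1)
      unfold dd; omega
  have dWX : (subdivision (pathPow (2*j+3))).dist (Sum.inr e) (Sum.inl x1) = 2*j+1 :=
    (SimpleGraph.dist_comm).trans dXW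
  -- d(u,x) = 2
  have dUX : (subdivision (pathPow (2*j+3))).dist (Sum.inl u0) (Sum.inl x1) = 2 := by
    obtain ⟨Wg, hWg⟩ := pathPow_walk' u0 x1 (show (0:ℕ) ≤ 1 by omega)
    obtain ⟨W', hW'⟩ := sub_walk _ Wg
    refine dist_eq_aux W' ?_ (pot (2*j+3) 0) (pot_lip _ 0) ?_
    · rw [hW', hWg]; show 2*((1 - 0 + 1)/2) = 2; omega
    · show 2 * dd 1 0 = 2 * dd 0 0 + 2; unfold dd; omega
  have := hA (Sum.inl u0) (Sum.inl p) (Sum.inr e) (Sum.inl x1)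
    (by rw [dUV, dVW, dUW]) (by rw [dVW, dWX, dVX]; omega) (sub_adj_lr _ p e hpe)
  rw [dUV, dVX, dUX] at this
  omega

theorem stmt17' (j : ℕ) :
    ∃ (V : Type) (_ : Fintype V) (G : SimpleGraph V),
      G.Connected ∧ alphaMetric G 1 ∧ ¬ alphaMetric (subdivision G) j :=
  ⟨Fin (2*j+3), inferInstance, pathPow (2*j+3),
    pathPow_connected (by omega), pathPow_alpha1 _, not_alpha j⟩

end Subdiv

/-- For every nonnegative integer `j`, there exists a (finite, connected)
`α_1`-metric graph `G` whose 1-subdivision `Σ(G)` is not `α_j`-metric. -/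
theorem stmt17 (j : ℕ) :
    ∃ (V : Type) (_ : Fintype V) (G : SimpleGraph V),
      G.Connected ∧ alphaMetric G 1 ∧ ¬ alphaMetric (subdivision G) j := by
  exact stmt17' j
end
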